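/- Let R = k[[x,y]]/(xy) and M = R/(x). Then M ⊗_R Hom_R(M,R) ≅ M and M is not free, so R fails the Huneke–Wiegand condition (HWC): M is a torsion-free module with M ⊗_R M* reflexive yet M not free. -/

import Mathlib

set_option maxHeartbeats 1000000
set_option synthInstance.maxHeartbeats 1000000

/-- The hypersurface `R = k[[x,y]]/(xy)`. -/
noncomputable abbrev R19 (k : Type) [Field k] :=
  MvPowerSeries (Fin 2) k ⧸
    Ideal.span {(MvPowerSeries.X 0 : MvPowerSeries (Fin 2) k) * MvPowerSeries.X 1}

/-- The image of `x` in `R = k[[x,y]]/(xy)`. -/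
noncomputable abbrev xR19 (k : Type) [Field k] : R19 k :=
  Ideal.Quotient.mk _ (MvPowerSeries.X 0)

namespace HW19

variable (k : Type) [Field k]

local notation "P" => MvPowerSeries (Fin 2) k
local notation "XX" => (MvPowerSeries.X 0 : MvPowerSeries (Fin 2) k)
local notation "YY" => (MvPowerSeries.X 1 : MvPowerSeries (Fin 2) k)
local notation "I0" => Ideal.span {(MvPowerSeries.X 0 : MvPowerSeries (Fin 2) k) * MvPowerSeries.X 1}

lemma X_ne_zero (i : Fin 2) : (MvPowerSeries.X i : P) ≠ 0 := by
  intro h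
  have := congrArg (MvPowerSeries.coeff (Finsupp.single i 1)) h
  simp [MvPowerSeries.coeff_X] at this

lemma X_not_dvd_one (i : Fin 2) : ¬ (MvPowerSeries.X i : P) ∣ 1 := by
  rintro ⟨g, hg⟩
  have := congrArg (MvPowerSeries.constantCoeff (σ := Fin 2) (R := k)) hg
  simp [MvPowerSeries.constantCoeff_X] at this

lemma mulY_mem_iff (p : P) : p * YY ∈ I0 ↔ XX ∣ p := by
  rw [Ideal.mem_span_singleton]
  constructor
  · rintro ⟨g, hg⟩
    exact ⟨g, mul_right_cancel₀ (X_ne_zero k 1) (by rw [hg]; ring)⟩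
  · rintro ⟨g, hg⟩
    exact ⟨g, by rw [hg]; ring⟩

lemma mulX_mem_iff (p : P) : p * XX ∈ I0 ↔ YY ∣ p := by
  rw [Ideal.mem_span_singleton]
  constructor
  · rintro ⟨g, hg⟩
    refine ⟨g, mul_right_cancel₀ (X_ne_zero k 0) ?_⟩
    rw [hg]; ring
  · rintro ⟨g, hg⟩
    exact ⟨g, by rw [hg]; ring⟩

lemma I0_le : I0 ≤ Ideal.span {XX} := by
  rw [Ideal.span_le]
  simp only [Set.singleton_subset_iff, SetLike.mem_coe, Ideal.mem_span_singleton]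
  exact ⟨YY, rfl⟩

lemma mem_spanx_iff (p : P) :
    Ideal.Quotient.mk I0 p ∈ Ideal.span {xR19 k} ↔ XX ∣ p := by
  have h1 : Ideal.span {xR19 k} = Ideal.map (Ideal.Quotient.mk I0) (Ideal.span {XX}) := by
    rw [Ideal.map_span, Set.image_singleton]
  rw [h1, Ideal.mem_quotient_iff_mem (I0_le k), Ideal.mem_span_singleton]

/-! ### Module level -/

local notation "Rk" => R19 k
local notation "Jk" => Ideal.span {xR19 k}
local notation "Mk" => (R19 k ⧸ Ideal.span {xR19 k})

noncomputable def yR : Rk := Ideal.Quotient.mk I0 YY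

lemma x_mul_y : xR19 k * yR k = 0 := by
  rw [show xR19 k * yR k = Ideal.Quotient.mk I0 (XX * YY) from rfl,
    Ideal.Quotient.eq_zero_iff_mem]
  exact Ideal.subset_span rfl

lemma x_smul_M (a : Mk) : xR19 k • a = 0 := by
  obtain ⟨r, rfl⟩ := Submodule.Quotient.mk_surjective _ a
  rw [← Submodule.Quotient.mk_smul, Submodule.Quotient.mk_eq_zero]
  exact Ideal.mul_mem_right r _ (Ideal.subset_span rfl)

/-- The map `M → R`, `mk r ↦ r * y`. -/
noncomputable def u : Mk →ₗ[Rk] Rk :=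
  Submodule.liftQ (Jk : Submodule Rk Rk) (LinearMap.toSpanSingleton Rk Rk (yR k)) <| by
    intro r hr
    obtain ⟨c, rfl⟩ := Ideal.mem_span_singleton'.mp hr
    simp only [LinearMap.mem_ker, LinearMap.toSpanSingleton_apply, smul_eq_mul]
    rw [mul_assoc, x_mul_y, mul_zero]

@[simp] lemma u_mk (r : Rk) : u k (Submodule.Quotient.mk r) = r * yR k := rfl

/-- The map `M → M*`, `b ↦ (a ↦ u (b * a))`. -/
noncomputable def e : Mk →ₗ[Rk] Module.Dual Rk Mk :=
  Submodule.liftQ (Jk : Submodule Rk Rk)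
    (LinearMap.toSpanSingleton Rk (Module.Dual Rk Mk) (u k)) <| by
    intro r hr
    obtain ⟨c, rfl⟩ := Ideal.mem_span_singleton'.mp hr
    simp only [LinearMap.mem_ker, LinearMap.toSpanSingleton_apply]
    rw [mul_smul]
    convert smul_zero (A := Module.Dual Rk Mk) c
    refine LinearMap.ext fun a => ?_
    obtain ⟨s, rfl⟩ := Submodule.Quotient.mk_surjective _ a
    simp only [LinearMap.smul_apply, u_mk, smul_eq_mul, LinearMap.zero_apply]
    rw [show xR19 k * (s * yR k) = s * (xR19 k * yR k) by ring, x_mul_y, mul_zero]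

@[simp] lemma e_mk_mk (r s : Rk) :
    e k (Submodule.Quotient.mk r) (Submodule.Quotient.mk s) = r * (s * yR k) := by
  show (r • u k) (Submodule.Quotient.mk s) = r * (s * yR k)
  rw [LinearMap.smul_apply, u_mk, smul_eq_mul]

lemma e_injective : Function.Injective (e k) := by
  rw [← LinearMap.ker_eq_bot, Submodule.eq_bot_iff]
  intro b hb
  obtain ⟨r, rfl⟩ := Submodule.Quotient.mk_surjective _ b
  obtain ⟨p, rfl⟩ := Ideal.Quotient.mk_surjective (I := I0) r
  have h1 : e k (Submodule.Quotient.mk (Ideal.Quotient.mk I0 p))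
      (Submodule.Quotient.mk 1) = 0 := by rw [hb]; rfl
  rw [e_mk_mk, one_mul] at h1
  have h2 : XX ∣ p := by
    rw [← mulY_mem_iff, ← Ideal.Quotient.eq_zero_iff_mem, map_mul]
    exact h1
  rw [Submodule.Quotient.mk_eq_zero]
  exact (mem_spanx_iff k p).mpr h2

lemma e_surjective : Function.Surjective (e k) := by
  intro φ
  set c := φ (Submodule.Quotient.mk 1) with hc
  obtain ⟨q, hq⟩ := Ideal.Quotient.mk_surjective (I := I0) c
  have hxc : xR19 k * c = 0 := by
    rw [show xR19 k * c = xR19 k • c from rfl, ← map_smul, x_smul_M, map_zero]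
  rw [← hq, show xR19 k * Ideal.Quotient.mk I0 q = Ideal.Quotient.mk I0 (XX * q) from rfl,
    Ideal.Quotient.eq_zero_iff_mem] at hxc
  have hyq : YY ∣ q := by
    rw [← mulX_mem_iff]
    rwa [mul_comm (MvPowerSeries.X 0 : MvPowerSeries (Fin 2) k) q] at hxc
  obtain ⟨g, hg⟩ := hyq
  refine ⟨Submodule.Quotient.mk (Ideal.Quotient.mk I0 g), ?_⟩
  refine LinearMap.ext fun a => ?_
  obtain ⟨r, rfl⟩ := Submodule.Quotient.mk_surjective _ a
  have hr : (Submodule.Quotient.mk r : Mk) = r • Submodule.Quotient.mk 1 := by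
    rw [← Submodule.Quotient.mk_smul, smul_eq_mul, mul_one]
  rw [e_mk_mk, hr, map_smul, ← hc, smul_eq_mul, ← hq, hg]
  rw [show (Ideal.Quotient.mk I0 g) * (r * yR k) = r * (Ideal.Quotient.mk I0 g * yR k) by ring]
  congr 1
  rw [map_mul]
  exact mul_comm _ _

/-- `M ≃ M*`. -/
noncomputable def E : Mk ≃ₗ[Rk] Module.Dual Rk Mk :=
  LinearEquiv.ofBijective (e k) ⟨e_injective k, e_surjective k⟩

lemma e_symm (a b : Mk) : e k a b = e k b a := by
  obtain ⟨r, rfl⟩ := Submodule.Quotient.mk_surjective _ a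
  obtain ⟨s, rfl⟩ := Submodule.Quotient.mk_surjective _ b
  rw [e_mk_mk, e_mk_mk]; ring

lemma isReflexive_M : Module.IsReflexive Rk Mk := by
  constructor
  have hfun : ⇑(Module.Dual.eval Rk Mk) = ⇑(E k).dualMap.symm ∘ ⇑(E k) := by
    funext m
    apply (E k).dualMap.injective
    rw [Function.comp_apply, LinearEquiv.apply_symm_apply]
    refine LinearMap.ext fun a => ?_
    rw [LinearEquiv.dualMap_apply]
    exact e_symm k a m
  rw [hfun]
  exact ((E k).dualMap.symm.bijective).comp (E k).bijective

lemma smul_top_eq_bot : (Jk • ⊤ : Submodule Rk Mk) = ⊥ := by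
  rw [eq_bot_iff]
  refine Submodule.smul_le.mpr ?_
  intro r hr m _
  obtain ⟨c, rfl⟩ := Ideal.mem_span_singleton'.mp hr
  rw [mul_smul, x_smul_M, smul_zero]
  exact Submodule.zero_mem ⊥

/-- `M ⊗ M* ≃ M`. -/
noncomputable def bigIso :
    (TensorProduct Rk Mk (Module.Dual Rk Mk)) ≃ₗ[Rk] Mk :=
  (TensorProduct.congr (LinearEquiv.refl Rk Mk) (E k).symm) ≪≫ₗ
    (TensorProduct.tensorQuotEquivQuotSMul Mk Jk) ≪≫ₗ
    (Submodule.quotEquivOfEqBot _ (smul_top_eq_bot k))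

lemma torsion_eq_bot : Submodule.torsion Rk Mk = ⊥ := by
  rw [Submodule.eq_bot_iff]
  rintro m ⟨⟨r, hrnzd⟩, hr⟩
  obtain ⟨s, rfl⟩ := Submodule.Quotient.mk_surjective _ m
  simp only [Submonoid.smul_def, ← Submodule.Quotient.mk_smul, smul_eq_mul,
    Submodule.Quotient.mk_eq_zero] at hr
  obtain ⟨c, hcs⟩ := Ideal.mem_span_singleton'.mp hr
  have h1 : (s * yR k) * r = 0 := by
    have : r * s * yR k = c * (xR19 k * yR k) := by rw [← hcs]; ring
    rw [x_mul_y, mul_zero] at this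
    rw [← this]; ring
  have h2 : s * yR k = 0 := mem_nonZeroDivisors_iff_right.mp hrnzd _ h1
  obtain ⟨p, rfl⟩ := Ideal.Quotient.mk_surjective (I := I0) s
  have h3 : XX ∣ p := by
    rw [← mulY_mem_iff, ← Ideal.Quotient.eq_zero_iff_mem (I := I0), map_mul]
    exact h2
  rw [Submodule.Quotient.mk_eq_zero]
  exact (mem_spanx_iff k p).mpr h3

lemma x_ne_zero' : xR19 k ≠ 0 := by
  rw [Ne, Ideal.Quotient.eq_zero_iff_mem, Ideal.mem_span_singleton]
  rintro ⟨g, hg⟩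
  refine X_not_dvd_one k 1 ⟨g, mul_left_cancel₀ (X_ne_zero k 0) ?_⟩
  rw [mul_one]
  exact hg.trans (by ring)

lemma nontrivial_M : Nontrivial Mk := by
  refine ⟨Submodule.Quotient.mk 1, 0, ?_⟩
  rw [Ne, Submodule.Quotient.mk_eq_zero]
  intro h
  have : XX ∣ (1 : P) := by
    rw [← mem_spanx_iff k 1]
    exact h
  exact X_not_dvd_one k 0 this

lemma not_free_M : ¬ Module.Free Rk Mk := by
  intro hfree
  haveI := nontrivial_M k
  let b := Module.Free.chooseBasis Rk Mk
  obtain ⟨i⟩ := b.index_nonempty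
  have h := x_smul_M k (b i)
  have h2 := congrArg (fun v => b.repr v i) h
  simp only [map_smul, Module.Basis.repr_self, Finsupp.smul_apply, Finsupp.single_eq_same,
    smul_eq_mul, mul_one, map_zero, Finsupp.coe_zero, Pi.zero_apply] at h2
  exact x_ne_zero' k h2

end HW19

/-- For `R = k[[x,y]]/(xy)` and `M = R/(x)`: `M ⊗_R M* ≅ M`, `M` is torsion-free,
`M ⊗_R M*` is reflexive, and yet `M` is not free; so `R` fails the Huneke–Wiegand
condition (HWC). -/
theorem stmt19 (k : Type) [Field k] :
    Nonempty ((TensorProduct (R19 k) (R19 k ⧸ Ideal.span {xR19 k})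
        (Module.Dual (R19 k) (R19 k ⧸ Ideal.span {xR19 k})))
      ≃ₗ[R19 k] (R19 k ⧸ Ideal.span {xR19 k})) ∧
    Submodule.torsion (R19 k) (R19 k ⧸ Ideal.span {xR19 k}) = ⊥ ∧
    Function.Bijective (Module.Dual.eval (R19 k)
      (TensorProduct (R19 k) (R19 k ⧸ Ideal.span {xR19 k})
        (Module.Dual (R19 k) (R19 k ⧸ Ideal.span {xR19 k})))) ∧
    ¬ Module.Free (R19 k) (R19 k ⧸ Ideal.span {xR19 k}) := by
  refine ⟨⟨HW19.bigIso k⟩, HW19.torsion_eq_bot k, ?_, HW19.not_free_M k⟩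
  haveI := HW19.isReflexive_M k
  haveI : Module.IsReflexive (R19 k)
      (TensorProduct (R19 k) (R19 k ⧸ Ideal.span {xR19 k})
        (Module.Dual (R19 k) (R19 k ⧸ Ideal.span {xR19 k}))) :=
    Module.equiv (HW19.bigIso k).symm
  exact Module.bijective_dual_eval _ _
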